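/- Let A, k, l, φ ∈ ℝ with A ≠ 0, k > 0, l > 0, define g(x) = A cos(kx − φ), and assume g(0)·g′(0) ≠ 0 and g(l)·g′(l) ≠ 0. Let Z be the number of points x ∈ (0, l) with g(x) = 0 and let C be the number of points x ∈ (0, l) with g′(x) = 0 (both are finite). Then 2(Z − C) = sign(g(l)·g′(l)) − sign(g(0)·g′(0)); in particular Z − C ∈ {−1, 0, 1}. -/

import Mathlib

open Real Set

private lemma floorlt' {d : ℝ} {n : ℤ} (hd : ∀ m : ℤ, (m:ℝ) ≠ d) : (n:ℝ) < d ↔ n ≤ ⌊d⌋ := by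
  constructor
  · intro h; exact Int.le_floor.mpr h.le
  · intro h
    have h1 : (n:ℝ) ≤ (⌊d⌋:ℝ) := by exact_mod_cast h
    have h2 : (⌊d⌋:ℝ) < d := lt_of_le_of_ne (Int.floor_le d) (hd _)
    linarith

private lemma prog_count (kk ll δ ψ : ℝ) (hk : 0 < kk) (hl : 0 < ll) (P : ℝ → Prop)
    (hP : ∀ θ : ℝ, P θ ↔ ∃ n : ℤ, θ = δ + n * π)
    (hL : ¬ P (kk * ll - ψ)) :
    {x ∈ Set.Ioo 0 ll | P (kk * x - ψ)}.Finite ∧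
    ({x ∈ Set.Ioo 0 ll | P (kk * x - ψ)}.ncard : ℤ)
      = ⌊(kk * ll - ψ - δ)/π⌋ - ⌊(-ψ - δ)/π⌋ := by
  have hπ : (0:ℝ) < π := Real.pi_pos
  set c := (-ψ - δ)/π with hc
  set d := (kk * ll - ψ - δ)/π with hd
  have hcd : c < d := by
    rw [hc, hd, div_lt_div_iff_of_pos_right hπ]
    nlinarith [mul_pos hk hl]
  have hdni : ∀ m : ℤ, (m:ℝ) ≠ d := by
    intro m hm
    apply hL
    rw [hP]
    refine ⟨m, ?_⟩
    have : (m:ℝ) * π = kk * ll - ψ - δ := by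
      rw [hm, hd, div_mul_cancel₀ _ (ne_of_gt hπ)]
    linarith
  have hinj : Function.Injective (fun n : ℤ => (ψ + δ + n * π)/kk) := by
    intro m n h
    simp only at h
    rw [div_eq_div_iff (ne_of_gt hk) (ne_of_gt hk)] at h
    have h2 : (m:ℝ) = n := by
      have := mul_right_cancel₀ (ne_of_gt hk) h
      have h3 : (m:ℝ) * π = n * π := by linarith
      exact mul_right_cancel₀ (ne_of_gt hπ) h3
    exact_mod_cast h2
  have hset : {x ∈ Set.Ioo 0 ll | P (kk * x - ψ)}
      = (fun n : ℤ => (ψ + δ + n * π)/kk) '' ↑(Finset.Ioc ⌊c⌋ ⌊d⌋) := by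
    ext x
    simp only [Set.mem_setOf_eq, Set.mem_Ioo, Set.mem_image, Finset.coe_Ioc, Set.mem_Ioc, hP]
    constructor
    · rintro ⟨⟨hx0, hxl⟩, n, hn⟩
      have hxk : kk * x = ψ + δ + n * π := by linarith
      have hx : (ψ + δ + n * π)/kk = x := by
        rw [div_eq_iff (ne_of_gt hk)]; linarith
      have h1 : 0 < ψ + δ + n * π := by nlinarith
      have h2 : ψ + δ + n * π < kk * ll := by nlinarith
      refine ⟨n, ⟨?_, ?_⟩, hx⟩
      · rw [Int.floor_lt, hc, div_lt_iff₀ hπ]; linarith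
      · rw [← floorlt' hdni, hd, lt_div_iff₀ hπ]; linarith
    · rintro ⟨n, ⟨hp, hq⟩, rfl⟩
      have h1 : c < (n:ℝ) := Int.floor_lt.mp hp
      have h2 : (n:ℝ) < d := (floorlt' hdni).mpr hq
      rw [hc, div_lt_iff₀ hπ] at h1
      rw [hd, lt_div_iff₀ hπ] at h2
      refine ⟨⟨div_pos (by linarith) hk, ?_⟩, n, ?_⟩
      · rw [div_lt_iff₀ hk]; linarith
      · rw [mul_div_cancel₀ _ (ne_of_gt hk)]; ring
  have hfin : {x ∈ Set.Ioo 0 ll | P (kk * x - ψ)}.Finite := by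
    rw [hset]; exact (Finset.Ioc ⌊c⌋ ⌊d⌋).finite_toSet.image _
  refine ⟨hfin, ?_⟩
  rw [hset, Set.ncard_image_of_injective _ hinj, Set.ncard_coe_finset, Int.card_Ioc]
  exact Int.toNat_of_nonneg (sub_nonneg.mpr (Int.floor_le_floor hcd.le))

private lemma sign_floor (θ C : ℝ) (hC : 0 < C) (hs : Real.sin θ ≠ 0) (hc : Real.cos θ ≠ 0) :
    (⌊θ/π - 1/2⌋ - ⌊θ/π⌋ = -1 ∨ ⌊θ/π - 1/2⌋ - ⌊θ/π⌋ = 0) ∧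
    Real.sign (-(C * (Real.sin θ * Real.cos θ)))
      = 1 + 2 * (((⌊θ/π - 1/2⌋ : ℤ) : ℝ) - ((⌊θ/π⌋ : ℤ) : ℝ)) := by
  have hπ : (0:ℝ) < π := Real.pi_pos
  set n := ⌊θ/π⌋ with hn
  set r := Int.fract (θ/π) with hr
  have hru : θ/π = n + r := by rw [hr, Int.fract]; ring
  have hθ : θ = π * n + π * r := by
    have : θ = π * (θ/π) := by field_simp
    rw [this, hru]; ring
  have hr0 : 0 < r := by
    rcases lt_or_eq_of_le (Int.fract_nonneg (θ/π)) with h | h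
    · exact h
    · exfalso; apply hs
      have hr00 : r = 0 := h.symm
      have : θ = (n:ℝ) * π := by rw [hθ, hr00]; ring
      rw [this]; exact Real.sin_int_mul_pi n
  have hr1 : r < 1 := Int.fract_lt_one _
  have hrh : r ≠ 1/2 := by
    intro h
    apply hc
    rw [Real.cos_eq_zero_iff]
    exact ⟨n, by rw [hθ, h]; push_cast; ring⟩
  have hsc : Real.sin θ * Real.cos θ = Real.sin (2 * π * r) / 2 := by
    have h1 : Real.sin (2 * θ) = Real.sin (2 * π * r) := by
      have : 2 * θ = 2 * π * r + (n:ℝ) * (2 * π) := by rw [hθ]; ring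
      rw [this, Real.sin_add_int_mul_two_pi]
    have h2 := Real.sin_two_mul θ
    rw [h1] at h2
    linarith
  rcases lt_or_gt_of_ne hrh with h | h
  · -- r < 1/2 : sin(2πr) > 0, sign = -1, floor diff = -1
    have hpos : 0 < Real.sin (2 * π * r) :=
      Real.sin_pos_of_pos_of_lt_pi (by nlinarith) (by nlinarith)
    have hneg : -(C * (Real.sin θ * Real.cos θ)) < 0 := by
      rw [hsc]; nlinarith
    have hfl : ⌊θ/π - 1/2⌋ = n - 1 := by
      rw [Int.floor_eq_iff]
      constructor
      · push_cast; rw [hru]; linarith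
      · push_cast; rw [hru]; linarith
    refine ⟨Or.inl (by rw [hfl]; ring), ?_⟩
    rw [Real.sign_of_neg hneg, hfl]
    push_cast; ring
  · -- r > 1/2 : sin(2πr) < 0, sign = 1, floor diff = 0
    have hnegs : Real.sin (2 * π * r) < 0 := by
      have h1 : 0 < Real.sin (2 * π * r - π) :=
        Real.sin_pos_of_pos_of_lt_pi (by nlinarith) (by nlinarith)
      have h2 : Real.sin (2 * π * r - π) = -Real.sin (2 * π * r) := Real.sin_sub_pi _
      linarith
    have hpos2 : 0 < -(C * (Real.sin θ * Real.cos θ)) := by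
      rw [hsc]; nlinarith
    have hfl : ⌊θ/π - 1/2⌋ = n := by
      rw [Int.floor_eq_iff]
      constructor
      · push_cast; rw [hru]; linarith
      · push_cast; rw [hru]; linarith
    refine ⟨Or.inr (by rw [hfl]; ring), ?_⟩
    rw [Real.sign_of_pos hpos2, hfl]
    push_cast; ring

/-- For `g x = A cos (k x - φ)` with `g·g'` nonzero at `0` and `l`, the numbers `Z` of
zeros of `g` and `C` of zeros of `g'` in `(0, l)` are finite and satisfy
`2(Z - C) = sign (g l · g' l) - sign (g 0 · g' 0)`; in particular `Z - C ∈ {-1, 0, 1}`. -/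
theorem stmt12 (A k l φ : ℝ) (hA : A ≠ 0) (hk : 0 < k) (hl : 0 < l)
    (g : ℝ → ℝ) (hg : g = fun x => A * Real.cos (k * x - φ))
    (h0 : g 0 * deriv g 0 ≠ 0) (hL : g l * deriv g l ≠ 0) :
    {x ∈ Set.Ioo 0 l | g x = 0}.Finite ∧
    {x ∈ Set.Ioo 0 l | deriv g x = 0}.Finite ∧
    2 * (({x ∈ Set.Ioo 0 l | g x = 0}.ncard : ℝ)
        - ({x ∈ Set.Ioo 0 l | deriv g x = 0}.ncard : ℝ))
      = Real.sign (g l * deriv g l) - Real.sign (g 0 * deriv g 0) ∧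
    (({x ∈ Set.Ioo 0 l | g x = 0}.ncard : ℤ)
        - ({x ∈ Set.Ioo 0 l | deriv g x = 0}.ncard : ℤ)) ∈ ({-1, 0, 1} : Set ℤ) := by
  have hπ : (0:ℝ) < π := Real.pi_pos
  have hπ' : (π:ℝ) ≠ 0 := ne_of_gt hπ
  have hderiv : deriv g = fun x => -(A*k) * Real.sin (k*x - φ) := by
    funext x
    have h1 : HasDerivAt (fun x : ℝ => k*x - φ) k x := by
      simpa using ((hasDerivAt_id x).const_mul k).sub_const φ
    have h2 : HasDerivAt (fun x => A * Real.cos (k*x - φ)) (A * (-Real.sin (k*x - φ) * k)) x :=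
      by have := ((Real.hasDerivAt_cos (k*x - φ)).comp x h1).const_mul A; exact this
    rw [hg, h2.deriv]; ring
  have hm0 : g 0 * deriv g 0 = -((A^2*k) * (Real.sin (k*0 - φ) * Real.cos (k*0 - φ))) := by
    rw [hderiv]; simp only [hg]; ring
  have hmL : g l * deriv g l = -((A^2*k) * (Real.sin (k*l - φ) * Real.cos (k*l - φ))) := by
    rw [hderiv]; simp only [hg]; ring
  have hs0 : Real.sin (k*0 - φ) ≠ 0 := by
    intro h; apply h0; rw [hm0, h]; ring
  have hc0 : Real.cos (k*0 - φ) ≠ 0 := by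
    intro h; apply h0; rw [hm0, h]; ring
  have hsL : Real.sin (k*l - φ) ≠ 0 := by
    intro h; apply hL; rw [hmL, h]; ring
  have hcL : Real.cos (k*l - φ) ≠ 0 := by
    intro h; apply hL; rw [hmL, h]; ring
  have hAk : -(A*k) ≠ 0 := neg_ne_zero.mpr (mul_ne_zero hA (ne_of_gt hk))
  -- count of zeros of g
  have hsetZ : {x ∈ Set.Ioo 0 l | g x = 0}
      = {x ∈ Set.Ioo 0 l | (fun θ => A * Real.cos θ = 0) (k*x - φ)} := by
    ext x; simp [hg]
  have hPZ : ∀ θ : ℝ, (A * Real.cos θ = 0) ↔ ∃ n : ℤ, θ = π/2 + n * π := by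
    intro θ
    rw [mul_eq_zero, or_iff_right hA, Real.cos_eq_zero_iff]
    constructor <;> rintro ⟨n, hn⟩ <;> exact ⟨n, by push_cast at hn ⊢; linarith⟩
  have hLZ : ¬ (fun θ => A * Real.cos θ = 0) (k*l - φ) := by
    intro h; rcases mul_eq_zero.mp h with h | h
    exacts [hA h, hcL h]
  obtain ⟨hfinZ, hcardZ⟩ :=
    prog_count k l (π/2) φ hk hl (fun θ => A * Real.cos θ = 0) hPZ hLZ
  rw [← hsetZ] at hfinZ hcardZ
  -- count of zeros of g'
  have hsetC : {x ∈ Set.Ioo 0 l | deriv g x = 0}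
      = {x ∈ Set.Ioo 0 l | (fun θ => -(A*k) * Real.sin θ = 0) (k*x - φ)} := by
    ext x; simp [hderiv]
  have hPC : ∀ θ : ℝ, (-(A*k) * Real.sin θ = 0) ↔ ∃ n : ℤ, θ = 0 + n * π := by
    intro θ
    rw [mul_eq_zero, or_iff_right hAk, Real.sin_eq_zero_iff]
    constructor <;> rintro ⟨n, hn⟩ <;> exact ⟨n, by linarith⟩
  have hLC : ¬ (fun θ => -(A*k) * Real.sin θ = 0) (k*l - φ) := by
    intro h; rcases mul_eq_zero.mp h with h | h
    exacts [hAk h, hsL h]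
  obtain ⟨hfinC, hcardC⟩ :=
    prog_count k l 0 φ hk hl (fun θ => -(A*k) * Real.sin θ = 0) hPC hLC
  rw [← hsetC] at hfinC hcardC
  -- align floor arguments
  rw [show (k*l - φ - π/2)/π = (k*l - φ)/π - 1/2 by
        rw [sub_div, div_div, mul_comm 2 π, ← div_div, div_self Real.pi_ne_zero],
      show (-φ - π/2)/π = (k*0 - φ)/π - 1/2 by
        rw [sub_div, div_div, mul_comm 2 π, ← div_div, div_self Real.pi_ne_zero]
        norm_num] at hcardZ
  rw [show (k*l - φ - 0)/π = (k*l - φ)/π by ring_nf,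
      show (-φ - 0)/π = (k*0 - φ)/π by ring_nf] at hcardC
  -- signs
  have hC : (0:ℝ) < A^2*k := mul_pos (by positivity) hk
  obtain ⟨hd0, hsign0⟩ := sign_floor (k*0 - φ) (A^2*k) hC hs0 hc0
  obtain ⟨hdL, hsignL⟩ := sign_floor (k*l - φ) (A^2*k) hC hsL hcL
  rw [← hm0] at hsign0
  rw [← hmL] at hsignL
  refine ⟨hfinZ, hfinC, ?_, ?_⟩
  · have hZR : ({x ∈ Set.Ioo 0 l | g x = 0}.ncard : ℝ)
        = ((⌊(k*l - φ)/π - 1/2⌋ : ℤ) : ℝ) - ((⌊(k*0 - φ)/π - 1/2⌋ : ℤ) : ℝ) := by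
      exact_mod_cast hcardZ
    have hCR : ({x ∈ Set.Ioo 0 l | deriv g x = 0}.ncard : ℝ)
        = ((⌊(k*l - φ)/π⌋ : ℤ) : ℝ) - ((⌊(k*0 - φ)/π⌋ : ℤ) : ℝ) := by
      exact_mod_cast hcardC
    rw [hZR, hCR, hsignL, hsign0]; ring
  · rw [hcardZ, hcardC]
    simp only [Set.mem_insert_iff, Set.mem_singleton_iff]
    rcases hd0 with h1 | h1 <;> rcases hdL with h2 | h2 <;> omega
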